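/- For pointed sets X and X' regarded as trivial partial abelian monoids (with sum defined only when one summand is the basepoint), the product X ⊗ X' is in natural bijection with the smash product X ∧ X': every element of T(X,X') is equivalent to a multiset of cardinality at most 1, and the class of a singleton (x,x') is the basepoint iff x or x' is the basepoint. -/

import Mathlib

/-- Pairwise insummability for the trivial partial abelian monoid on a pointed
set: every two-element sub-multiset is insummable, i.e. has both entries
non-basepoint. -/
def PInsum {A : Type*} (z : A) (s : Multiset A) : Prop :=
  ∀ a b : A, a ::ₘ {b} ≤ s → ¬(a = z ∨ b = z)

/-- Summability of a multiset in the trivial partial abelian monoid: every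
two-element sub-multiset contains the basepoint (equivalently, at most one
entry is non-basepoint). -/
def TrivSumm {A : Type*} (z : A) (s : Multiset A) : Prop :=
  ∀ a b : A, a ::ₘ {b} ≤ s → (a = z ∨ b = z)

/-- The admissible multisets `T(X,X') ⊆ 𝕄(X × X')` for trivial partial abelian
monoids: for every sub-multiset, if one projection is pairwise insummable then
the other is summable. -/
def Adm {X Y : Type*} (x0 : X) (y0 : Y) (σ : Multiset (X × Y)) : Prop :=
  ∀ τ, τ ≤ σ →
    (PInsum x0 (τ.map Prod.fst) → TrivSumm y0 (τ.map Prod.snd)) ∧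
    (PInsum y0 (τ.map Prod.snd) → TrivSumm x0 (τ.map Prod.fst))

/-- The generating relations for `X ⊗ X'` with trivial partial sums: deleting
pairs with a basepoint coordinate, and splitting a (necessarily trivial) sum in
either coordinate. -/
inductive TRel {X Y : Type*} (x0 : X) (y0 : Y) :
    Multiset (X × Y) → Multiset (X × Y) → Prop
  | del (x y σ) : (x = x0 ∨ y = y0) → TRel x0 y0 ((x, y) ::ₘ σ) σ
  | splitL (x y σ) : TRel x0 y0 ((x, y) ::ₘ σ) ((x, y) ::ₘ (x0, y) ::ₘ σ)
  | splitR (x y σ) : TRel x0 y0 ((x, y) ::ₘ σ) ((x, y) ::ₘ (x, y0) ::ₘ σ)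

/-- The least equivalence relation generated by the relations. -/
def Eqv {X Y : Type*} (x0 : X) (y0 : Y) :
    Multiset (X × Y) → Multiset (X × Y) → Prop :=
  Relation.EqvGen (TRel x0 y0)

/-- The product `X ⊗ X'`: admissible multisets modulo the equivalence. -/
def Tensor {X Y : Type*} (x0 : X) (y0 : Y) : Type _ :=
  Quot (fun a b : {σ : Multiset (X × Y) // Adm x0 y0 σ} => Eqv x0 y0 a.1 b.1)

/-- The smash product `X ∧ X' = (X × X')/(X ∨ X')`. -/
def Smash {X Y : Type*} (x0 : X) (y0 : Y) : Type _ :=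
  Quot (fun a b : X × Y =>
    (a.1 = x0 ∨ a.2 = y0) ∧ (b.1 = x0 ∨ b.2 = y0))

/- ==================== auxiliary development ==================== -/

noncomputable def ndFilter {X Y : Type*} (x0 : X) (y0 : Y) (σ : Multiset (X × Y)) :
    Multiset (X × Y) :=
  @Multiset.filter _ (fun p => p.1 ≠ x0 ∧ p.2 ≠ y0) (Classical.decPred _) σ

theorem ndFilter_le {X Y : Type*} (x0 : X) (y0 : Y) (σ : Multiset (X × Y)) :
    ndFilter x0 y0 σ ≤ σ := @Multiset.filter_le _ _ (Classical.decPred _) σ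

theorem ndFilter_trel {X Y : Type*} {x0 : X} {y0 : Y} {s t : Multiset (X × Y)}
    (h : TRel x0 y0 s t) : ndFilter x0 y0 s = ndFilter x0 y0 t := by
  classical
  cases h with
  | del x y h2 =>
    simp only [ndFilter, Multiset.filter_cons]
    rw [if_neg]
    · simp
    · rintro ⟨h1', h2'⟩
      rcases (by assumption : x = x0 ∨ y = y0) with h | h <;> simp_all
  | splitL x y u =>
    rw [Multiset.cons_swap (x, y) (x0, y) u]
    simp only [ndFilter, Multiset.filter_cons]
    rw [if_neg (by rintro ⟨h1, _⟩; exact h1 rfl : ¬((x0, y).1 ≠ x0 ∧ (x0, y).2 ≠ y0))]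
    simp
  | splitR x y u =>
    rw [Multiset.cons_swap (x, y) (x, y0) u]
    simp only [ndFilter, Multiset.filter_cons]
    rw [if_neg (by rintro ⟨_, h2⟩; exact h2 rfl : ¬((x, y0).1 ≠ x0 ∧ (x, y0).2 ≠ y0))]
    simp

theorem ndFilter_eqv {X Y : Type*} {x0 : X} {y0 : Y} {s t : Multiset (X × Y)}
    (h : Eqv x0 y0 s t) : ndFilter x0 y0 s = ndFilter x0 y0 t := by
  induction h with
  | rel _ _ h => exact ndFilter_trel h
  | refl => rfl
  | symm _ _ _ ih => exact ih.symm
  | trans _ _ _ _ _ ih1 ih2 => exact ih1.trans ih2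

theorem trel_cons {X Y : Type*} {x0 : X} {y0 : Y} (p : X × Y) {s t : Multiset (X × Y)}
    (h : TRel x0 y0 s t) : TRel x0 y0 (p ::ₘ s) (p ::ₘ t) := by
  cases h with
  | del x y h2 =>
    rw [Multiset.cons_swap]
    exact TRel.del x y (p ::ₘ t) (by assumption)
  | splitL x y u =>
    rw [Multiset.cons_swap p (x, y) u, Multiset.cons_swap p (x, y) ((x0, y) ::ₘ u),
      Multiset.cons_swap p (x0, y) u]
    exact TRel.splitL x y (p ::ₘ u)
  | splitR x y u =>
    rw [Multiset.cons_swap p (x, y) u, Multiset.cons_swap p (x, y) ((x, y0) ::ₘ u),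
      Multiset.cons_swap p (x, y0) u]
    exact TRel.splitR x y (p ::ₘ u)

theorem eqv_cons {X Y : Type*} {x0 : X} {y0 : Y} (p : X × Y) {s t : Multiset (X × Y)}
    (h : Eqv x0 y0 s t) : Eqv x0 y0 (p ::ₘ s) (p ::ₘ t) := by
  induction h with
  | rel _ _ h => exact Relation.EqvGen.rel _ _ (trel_cons p h)
  | refl => exact Relation.EqvGen.refl _
  | symm _ _ _ ih => exact Relation.EqvGen.symm _ _ ih
  | trans _ b _ _ _ ih1 ih2 => exact Relation.EqvGen.trans _ _ _ ih1 ih2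

theorem eqv_ndFilter {X Y : Type*} (x0 : X) (y0 : Y) (σ : Multiset (X × Y)) :
    Eqv x0 y0 σ (ndFilter x0 y0 σ) := by
  classical
  induction σ using Multiset.induction with
  | empty => exact Relation.EqvGen.refl _
  | cons p s ih =>
    by_cases hp : p.1 ≠ x0 ∧ p.2 ≠ y0
    · rw [show ndFilter x0 y0 (p ::ₘ s) = p ::ₘ ndFilter x0 y0 s by
        simp only [ndFilter, Multiset.filter_cons]; rw [if_pos hp]; simp]
      exact eqv_cons p ih
    · rw [show ndFilter x0 y0 (p ::ₘ s) = ndFilter x0 y0 s by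
        simp only [ndFilter, Multiset.filter_cons]; rw [if_neg hp]; simp]
      refine Relation.EqvGen.trans _ _ _ ?_ ih
      obtain ⟨x, y⟩ := p
      refine Relation.EqvGen.rel _ _ (TRel.del x y s ?_)
      by_contra hc
      push_neg at hc
      exact hp ⟨hc.1, hc.2⟩

theorem mem_ndFilter {X Y : Type*} {x0 : X} {y0 : Y} {p : X × Y} {σ : Multiset (X × Y)} :
    p ∈ ndFilter x0 y0 σ ↔ p ∈ σ ∧ (p.1 ≠ x0 ∧ p.2 ≠ y0) := by
  simp [ndFilter, Multiset.mem_filter]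

theorem two_le_card {A : Type*} {s : Multiset A} (h : 2 ≤ Multiset.card s) :
    ∃ a b t, s = a ::ₘ b ::ₘ t := by
  have h1 : 0 < Multiset.card s := by omega
  obtain ⟨a, ha⟩ := Multiset.card_pos_iff_exists_mem.1 h1
  obtain ⟨t, rfl⟩ := Multiset.exists_cons_of_mem ha
  simp only [Multiset.card_cons] at h
  have h2 : 0 < Multiset.card t := by omega
  obtain ⟨b, hb⟩ := Multiset.card_pos_iff_exists_mem.1 h2
  obtain ⟨u, rfl⟩ := Multiset.exists_cons_of_mem hb
  exact ⟨a, b, u, rfl⟩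

theorem card_ndFilter_le {X Y : Type*} {x0 : X} {y0 : Y} {σ : Multiset (X × Y)}
    (h : Adm x0 y0 σ) : Multiset.card (ndFilter x0 y0 σ) ≤ 1 := by
  classical
  by_contra hc
  obtain ⟨a, b, t, ht⟩ := two_le_card (s := ndFilter x0 y0 σ) (by omega)
  have ha : a ∈ ndFilter x0 y0 σ := by rw [ht]; simp
  have hb : b ∈ ndFilter x0 y0 σ := by rw [ht]; simp
  have hna : a.1 ≠ x0 ∧ a.2 ≠ y0 := (mem_ndFilter.1 ha).2
  have hnb : b.1 ≠ x0 ∧ b.2 ≠ y0 := (mem_ndFilter.1 hb).2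
  have hsub : (a ::ₘ {b} : Multiset (X × Y)) ≤ σ := by
    refine le_trans ?_ (ndFilter_le x0 y0 σ)
    rw [ht]
    exact Multiset.cons_le_cons a (Multiset.cons_le_cons b zero_le)
  have hadm := (h _ hsub).1
  have hmapf : (a ::ₘ {b}).map Prod.fst = a.1 ::ₘ {b.1} := by simp
  have hmaps : (a ::ₘ {b}).map Prod.snd = a.2 ::ₘ {b.2} := by simp
  have hpin : PInsum x0 ((a ::ₘ {b}).map Prod.fst) := by
    intro c d hcd
    rw [hmapf] at hcd
    have hc' : c ∈ (a.1 ::ₘ {b.1} : Multiset X) := Multiset.mem_of_le hcd (by simp)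
    have hd' : d ∈ (a.1 ::ₘ {b.1} : Multiset X) := Multiset.mem_of_le hcd (by simp)
    simp only [Multiset.mem_cons, Multiset.mem_singleton] at hc' hd'
    rintro (rfl | rfl)
    · rcases hc' with rfl | rfl
      · exact hna.1 rfl
      · exact hnb.1 rfl
    · rcases hd' with rfl | rfl
      · exact hna.1 rfl
      · exact hnb.1 rfl
  have := hadm hpin a.2 b.2 (by rw [hmaps])
  rcases this with h' | h'
  · exact hna.2 h'
  · exact hnb.2 h'

theorem adm_singleton {X Y : Type*} (x0 : X) (y0 : Y) (p : X × Y) :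
    Adm x0 y0 ({p} : Multiset (X × Y)) := by
  intro τ hτ
  have hcard : Multiset.card τ ≤ 1 := by
    have := Multiset.card_le_card hτ; simpa using this
  constructor <;> intro _ a b hab <;> {
    exfalso
    have h2 := Multiset.card_le_card hab
    simp only [Multiset.card_cons, Multiset.card_singleton, Multiset.card_map] at h2
    omega }

open Classical in
noncomputable def smashOf {X Y : Type*} (x0 : X) (y0 : Y) (m : Multiset (X × Y)) :
    Smash x0 y0 :=
  if h : ∃ p, m = {p} then Quot.mk _ h.choose else Quot.mk _ (x0, y0)

theorem smashOf_singleton {X Y : Type*} (x0 : X) (y0 : Y) (p : X × Y) :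
    smashOf x0 y0 {p} = Quot.mk _ p := by
  unfold smashOf
  erw [dif_pos ⟨p, rfl⟩]
  congr 1
  have := (⟨p, rfl⟩ : ∃ q, ({p} : Multiset (X × Y)) = {q}).choose_spec
  exact (Multiset.singleton_inj.1 this.symm)

theorem smashOf_zero {X Y : Type*} (x0 : X) (y0 : Y) :
    smashOf x0 y0 (0 : Multiset (X × Y)) = Quot.mk _ (x0, y0) := by
  unfold smashOf
  erw [dif_neg]
  rintro ⟨p, hp⟩
  exact absurd (congrArg Multiset.card hp) (by simp)

noncomputable def tToS {X Y : Type*} (x0 : X) (y0 : Y) : Tensor x0 y0 → Smash x0 y0 :=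
  Quot.lift (fun s => smashOf x0 y0 (ndFilter x0 y0 s.1))
    (fun _ _ hab => by beta_reduce; rw [ndFilter_eqv hab])

theorem eqv_singleton_zero {X Y : Type*} {x0 : X} {y0 : Y} {p : X × Y}
    (h : p.1 = x0 ∨ p.2 = y0) : Eqv x0 y0 {p} 0 := by
  obtain ⟨x, y⟩ := p
  exact Relation.EqvGen.rel _ _ (TRel.del x y 0 h)

noncomputable def sToT {X Y : Type*} (x0 : X) (y0 : Y) : Smash x0 y0 → Tensor x0 y0 :=
  Quot.lift (fun p => Quot.mk _ ⟨{p}, adm_singleton x0 y0 p⟩)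
    (fun a b hab => Quot.sound (Relation.EqvGen.trans _ _ _ (eqv_singleton_zero hab.1)
      (Relation.EqvGen.symm _ _ (eqv_singleton_zero hab.2))))

theorem ndFilter_singleton_pos {X Y : Type*} {x0 : X} {y0 : Y} {p : X × Y}
    (h : p.1 ≠ x0 ∧ p.2 ≠ y0) : ndFilter x0 y0 {p} = {p} := by
  classical
  show ndFilter x0 y0 (p ::ₘ 0) = _
  simp only [ndFilter, Multiset.filter_cons]
  rw [if_pos h]
  simp

theorem ndFilter_singleton_neg {X Y : Type*} {x0 : X} {y0 : Y} {p : X × Y}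
    (h : ¬(p.1 ≠ x0 ∧ p.2 ≠ y0)) : ndFilter x0 y0 {p} = 0 := by
  classical
  show ndFilter x0 y0 (p ::ₘ 0) = _
  simp only [ndFilter, Multiset.filter_cons]
  rw [if_neg h]
  simp

theorem tToS_single {X Y : Type*} (x0 : X) (y0 : Y) (p : X × Y)
    (h : Adm x0 y0 ({p} : Multiset (X × Y))) :
    tToS x0 y0 (Quot.mk _ ⟨{p}, h⟩) = Quot.mk _ p := by
  show smashOf x0 y0 (ndFilter x0 y0 {p}) = _
  by_cases hp : p.1 ≠ x0 ∧ p.2 ≠ y0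
  · rw [ndFilter_singleton_pos hp, smashOf_singleton]
  · rw [ndFilter_singleton_neg hp, smashOf_zero]
    push_neg at hp
    refine Quot.sound ⟨Or.inl rfl, ?_⟩
    by_cases hx : p.1 = x0
    · exact Or.inl hx
    · exact Or.inr (hp hx)

example : True := trivial


/-- For pointed sets `X, X'` with trivial partial sums, `X ⊗ X'` is in natural
bijection with the smash product `X ∧ X'`: every element of `T(X,X')` is
equivalent to a multiset of cardinality at most one, and the class of a
singleton `(x,x')` is the basepoint iff `x` or `x'` is the basepoint. -/
theorem tensor_eq_smash {X Y : Type*} (x0 : X) (y0 : Y) :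
    (∀ σ : Multiset (X × Y), Adm x0 y0 σ →
      ∃ τ : Multiset (X × Y), Multiset.card τ ≤ 1 ∧ Eqv x0 y0 σ τ) ∧
    (∀ (x : X) (y : Y), Eqv x0 y0 {(x, y)} 0 ↔ (x = x0 ∨ y = y0)) ∧
    ∃ e : Tensor x0 y0 ≃ Smash x0 y0,
      ∀ (x : X) (y : Y) (h : Adm x0 y0 ({(x, y)} : Multiset (X × Y))),
        e (Quot.mk _ ⟨{(x, y)}, h⟩) = Quot.mk _ (x, y) := by


  classical
  refine ⟨?_, ?_, ?_⟩
  · intro σ h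
    exact ⟨ndFilter x0 y0 σ, card_ndFilter_le h, eqv_ndFilter x0 y0 σ⟩
  · intro x y
    constructor
    · intro h
      have h0 := ndFilter_eqv h
      by_contra hc
      push_neg at hc
      rw [ndFilter_singleton_pos (p := (x, y)) ⟨hc.1, hc.2⟩] at h0
      have : ndFilter x0 y0 (0 : Multiset (X × Y)) = 0 := rfl
      rw [this] at h0
      exact absurd (congrArg Multiset.card h0) (by simp)
    · intro h
      exact eqv_singleton_zero (p := (x, y)) h
  · refine ⟨⟨tToS x0 y0, sToT x0 y0, ?_, ?_⟩, ?_⟩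
    · intro t
      induction t using Quot.ind with
      | _ s =>
        obtain ⟨σ, h⟩ := s
        have hc := card_ndFilter_le h
        interval_cases hcard : Multiset.card (ndFilter x0 y0 σ)
        · have h0 : ndFilter x0 y0 σ = 0 := Multiset.card_eq_zero.1 hcard
          show sToT x0 y0 (smashOf x0 y0 (ndFilter x0 y0 σ)) = _
          rw [h0, smashOf_zero]
          show Quot.mk _ _ = _
          refine Quot.sound ?_
          refine Relation.EqvGen.trans _ _ _ (eqv_singleton_zero (Or.inl rfl)) ?_
          refine Relation.EqvGen.symm _ _ ?_
          have := eqv_ndFilter x0 y0 σ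
          rwa [h0] at this
        · obtain ⟨p, hp⟩ := Multiset.card_eq_one.1 hcard
          show sToT x0 y0 (smashOf x0 y0 (ndFilter x0 y0 σ)) = _
          rw [hp, smashOf_singleton]
          show Quot.mk _ _ = _
          refine Quot.sound ?_
          refine Relation.EqvGen.symm _ _ ?_
          have := eqv_ndFilter x0 y0 σ
          rwa [hp] at this
    · intro s
      induction s using Quot.ind with
      | _ p => exact tToS_single x0 y0 p (adm_singleton x0 y0 p)
    · intro x y h
      exact tToS_single x0 y0 (x, y) h
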